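/- A k-dimensional subspace V of ℝⁿ satisfies ‖x‖₁² ≤ k·‖x‖₂² for all x ∈ V if and only if V is the span of a set of k standard basis vectors. -/

import Mathlib

open Finset

private def sg (b : Bool) : ℝ := if b then 1 else -1

private lemma sg_mul_self (b : Bool) : sg b * sg b = 1 := by cases b <;> norm_num [sg]

private lemma sg_not (b : Bool) : sg (!b) = - sg b := by cases b <;> norm_num [sg]

private lemma abs_sg (b : Bool) : |sg b| = 1 := by cases b <;> norm_num [sg]

private lemma sum_flip_zero {n : ℕ} (f : (Fin n → Bool) → ℝ) (c : Fin n)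
    (hf : ∀ ε, f (Function.update ε c (!(ε c))) = - f ε) :
    ∑ ε : Fin n → Bool, f ε = 0 := by
  classical
  refine Finset.sum_involution (fun ε _ => Function.update ε c (!(ε c))) ?_ ?_ ?_ ?_
  · intro ε _; rw [hf]; ring
  · intro ε _ hne heq
    have := congrFun heq c
    simp [Function.update_self] at this
  · intro ε _; exact Finset.mem_univ _
  · intro ε _
    funext x
    by_cases hx : x = c
    · subst hx; simp [Function.update_self]
    · simp [Function.update_of_ne hx]

private lemma sg_update {n : ℕ} (c x : Fin n) (ε : Fin n → Bool) :
    sg (Function.update ε c (!(ε c)) x) = (if x = c then -1 else 1) * sg (ε x) := by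
  by_cases h : x = c
  · subst h; simp [Function.update_self, sg_not]
  · simp [Function.update_of_ne h, h]

private lemma sum_univ_bool_card {n : ℕ} : ∑ _ε : Fin n → Bool, (1:ℝ) = 2 ^ n := by
  classical
  simp [Finset.card_univ, Fintype.card_fun]

private lemma sum_sg_two {n : ℕ} (c d : Fin n) :
    ∑ ε : Fin n → Bool, sg (ε c) * sg (ε d) = if c = d then (2:ℝ) ^ n else 0 := by
  by_cases h : c = d
  · subst h; rw [if_pos rfl, ← sum_univ_bool_card]
    exact Finset.sum_congr rfl fun ε _ => sg_mul_self _
  · rw [if_neg h]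
    refine sum_flip_zero _ c fun ε => ?_
    simp only [sg_update]
    simp [h, Ne.symm h]

private lemma sum_sg_four {n : ℕ} {a b : Fin n} (hab : a ≠ b) (i j : Fin n) :
    ∑ ε : Fin n → Bool, sg (ε a) * sg (ε b) * sg (ε i) * sg (ε j) =
      (if i = a ∧ j = b then (2:ℝ) ^ n else 0) + (if i = b ∧ j = a then (2:ℝ) ^ n else 0) := by
  by_cases hia : i = a
  · subst hia
    by_cases hjb : j = b
    · subst hjb
      rw [if_pos ⟨rfl, rfl⟩, if_neg (fun h => hab h.1), add_zero, ← sum_univ_bool_card]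
      refine Finset.sum_congr rfl fun ε _ => ?_
      linear_combination sg (ε j) * sg (ε j) * sg_mul_self (ε i) + sg_mul_self (ε j)
    · rw [if_neg (fun h => hjb h.2), if_neg (fun h => hab h.1), add_zero]
      refine sum_flip_zero _ b fun ε => ?_
      simp only [sg_update]
      simp [hab, Ne.symm hab, hjb]
  · by_cases hib : i = b
    · subst hib
      by_cases hja : j = a
      · subst hja
        rw [if_neg (fun h => hia h.1), if_pos ⟨rfl, rfl⟩, zero_add, ← sum_univ_bool_card]
        refine Finset.sum_congr rfl fun ε _ => ?_
        linear_combination sg (ε i) * sg (ε i) * sg_mul_self (ε j) + sg_mul_self (ε i)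
      · rw [if_neg (fun h => hia h.1), if_neg (fun h => hja h.2), add_zero]
        refine sum_flip_zero _ a fun ε => ?_
        simp only [sg_update]
        simp [hab, hia, Ne.symm hia, hja]
    · rw [if_neg (fun h => hia h.1), if_neg (fun h => hib h.1), add_zero]
      by_cases hji : j = i
      · subst hji
        refine sum_flip_zero _ a fun ε => ?_
        simp only [sg_update]
        simp [hab, Ne.symm hab, hia, hib]
      · refine sum_flip_zero _ i fun ε => ?_
        simp only [sg_update]
        simp [hia, hib, hji, Ne.symm hia, Ne.symm hib]

private lemma diag_of_Q {n : ℕ} {k : ℝ} (M : Fin n → Fin n → ℝ) (hsym : ∀ i j, M i j = M j i)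
    (hQ : ∀ ε : Fin n → Bool, ∑ i, ∑ j, sg (ε i) * sg (ε j) * M i j = k)
    {a b : Fin n} (hab : a ≠ b) : M a b = 0 := by
  classical
  have h1 : ∑ ε : Fin n → Bool, sg (ε a) * sg (ε b) *
      (∑ i, ∑ j, sg (ε i) * sg (ε j) * M i j) = 0 := by
    have : ∀ ε : Fin n → Bool, sg (ε a) * sg (ε b) *
        (∑ i, ∑ j, sg (ε i) * sg (ε j) * M i j) = sg (ε a) * sg (ε b) * k := by
      intro ε; rw [hQ]
    rw [Finset.sum_congr rfl fun ε _ => this ε, ← Finset.sum_mul, sum_sg_two, if_neg hab,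
      zero_mul]
  have h2 : ∑ ε : Fin n → Bool, sg (ε a) * sg (ε b) *
      (∑ i, ∑ j, sg (ε i) * sg (ε j) * M i j) = 2 ^ n * M a b + 2 ^ n * M b a := by
    have e1 : ∀ ε : Fin n → Bool, sg (ε a) * sg (ε b) *
        (∑ i, ∑ j, sg (ε i) * sg (ε j) * M i j) =
        ∑ i, ∑ j, sg (ε a) * sg (ε b) * sg (ε i) * sg (ε j) * M i j := by
      intro ε
      rw [Finset.mul_sum]
      refine Finset.sum_congr rfl fun i _ => ?_
      rw [Finset.mul_sum]
      exact Finset.sum_congr rfl fun j _ => by ring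
    rw [Finset.sum_congr rfl fun ε _ => e1 ε, Finset.sum_comm]
    have e2 : ∀ i, ∑ ε : Fin n → Bool, ∑ j, sg (ε a) * sg (ε b) * sg (ε i) * sg (ε j) * M i j
        = ∑ j, ((if i = a ∧ j = b then (2:ℝ) ^ n else 0)
            + (if i = b ∧ j = a then (2:ℝ) ^ n else 0)) * M i j := by
      intro i
      rw [Finset.sum_comm]
      refine Finset.sum_congr rfl fun j _ => ?_
      rw [← Finset.sum_mul, sum_sg_four hab]
    rw [Finset.sum_congr rfl fun i _ => e2 i]
    simp only [add_mul, ite_mul, zero_mul, Finset.sum_add_distrib, ite_and]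
    rw [Finset.sum_comm (γ := Fin n)]
    simp [Finset.sum_ite_eq, Finset.sum_ite_eq']
  have h3 : (2:ℝ) ^ n * M a b + 2 ^ n * M b a = 0 := by rw [← h2, h1]
  have h4 : (0:ℝ) < 2 ^ n := by positivity
  rw [hsym b a] at h3
  nlinarith [h3, h4]

private lemma exists_orthonormal_family {n k : ℕ} (V : Submodule ℝ (Fin n → ℝ))
    (hdim : Module.finrank ℝ V = k) :
    ∃ u : Fin k → (Fin n → ℝ),
      (∀ j, u j ∈ V) ∧
      (∀ j l, ∑ a, u j a * u l a = if j = l then 1 else 0) ∧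
      (∀ x ∈ V, ∀ i, x i = ∑ j, (∑ a, u j a * x a) * u j i) := by
  classical
  let e : EuclideanSpace ℝ (Fin n) ≃ₗ[ℝ] (Fin n → ℝ) := WithLp.linearEquiv 2 ℝ (Fin n → ℝ)
  let W : Submodule ℝ (EuclideanSpace ℝ (Fin n)) := V.comap e.toLinearMap
  have hWdim : Module.finrank ℝ W = k := by
    rw [show W = Submodule.comap e.toLinearMap V from rfl,
      Submodule.comap_equiv_eq_map_symm, LinearEquiv.finrank_map_eq]
    exact hdim
  let b : OrthonormalBasis (Fin k) ℝ W :=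
    (stdOrthonormalBasis ℝ W).reindex (finCongr hWdim)
  refine ⟨fun j => e ((b j : W) : EuclideanSpace ℝ (Fin n)), ?_, ?_, ?_⟩
  · intro j
    exact (b j).2
  · intro j l
    have horth := b.orthonormal
    rw [orthonormal_iff_ite] at horth
    have := horth j l
    rw [Submodule.coe_inner, PiLp.inner_apply] at this
    simp [RCLike.inner_apply, e] at this
    rw [← this]
    exact Finset.sum_congr rfl fun _ _ => mul_comm _ _
  · intro x hx i
    have hxW : e.symm x ∈ W := by
      simp only [W, Submodule.mem_comap, LinearEquiv.coe_coe, LinearEquiv.apply_symm_apply]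
      exact hx
    have hrep := b.sum_repr' (⟨e.symm x, hxW⟩ : W)
    have hcoe := congrArg (fun y : W => ((y : EuclideanSpace ℝ (Fin n)) i)) hrep
    simp only [Submodule.coe_sum, Submodule.coe_smul, Finset.sum_apply, PiLp.smul_apply,
      smul_eq_mul, Submodule.coe_inner, PiLp.inner_apply, RCLike.inner_apply,
      conj_trivial] at hcoe
    have he : ∀ (y : EuclideanSpace ℝ (Fin n)) (a : Fin n), e y a = y a := fun _ _ => rfl
    have hes : ∀ a : Fin n, e.symm x a = x a := fun _ => rfl
    have hsum : ∀ (f : Fin k → EuclideanSpace ℝ (Fin n)) (a : Fin n),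
        (∑ j, f j) a = ∑ j, f j a := by
      intro f a
      rw [WithLp.ofLp_sum]
      exact Finset.sum_apply a Finset.univ fun j => (f j).ofLp
    rw [hsum] at hcoe
    simp only [he]
    rw [show x i = e.symm x i from rfl, ← hcoe]
    exact Finset.sum_congr rfl fun j _ => by
      rw [Finset.sum_congr rfl fun a _ => by rw [hes a]]
      simp only [WithLp.ofLp_smul, Pi.smul_apply, smul_eq_mul]
      congr 1
      exact Finset.sum_congr rfl fun _ _ => mul_comm _ _

/-- A k-dimensional subspace V of ℝⁿ satisfies ‖x‖₁² ≤ k‖x‖₂² for all x ∈ V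
iff V is the span of k standard basis vectors. -/
theorem stmt_10 {n k : ℕ} (V : Submodule ℝ (Fin n → ℝ))
    (hdim : Module.finrank ℝ V = k) :
    (∀ x ∈ V, (∑ i, |x i|)^2 ≤ (k : ℝ) * ∑ i, (x i)^2) ↔
      ∃ s : Finset (Fin n), s.card = k ∧
        V = Submodule.span ℝ ((fun i => (Pi.single i (1:ℝ) : Fin n → ℝ)) '' ↑s) := by
  classical
  constructor
  · intro h
    obtain ⟨u, humem, horth, hrepr⟩ := exists_orthonormal_family V hdim
    set M : Fin n → Fin n → ℝ := fun i j => ∑ l, u l i * u l j with hM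
    have hsym : ∀ i j, M i j = M j i := fun i j =>
      Finset.sum_congr rfl fun l _ => mul_comm _ _
    have hrow : ∀ x ∈ V, ∀ i, ∑ i', M i i' * x i' = x i := by
      intro x hx i
      rw [hrepr x hx i]
      calc ∑ i', (∑ l, u l i * u l i') * x i'
          = ∑ i', ∑ l, u l i * u l i' * x i' := by
            exact Finset.sum_congr rfl fun i' _ => Finset.sum_mul _ _ _
        _ = ∑ l, ∑ i', u l i * u l i' * x i' := Finset.sum_comm
        _ = ∑ l, (∑ a, u l a * x a) * u l i := by
            refine Finset.sum_congr rfl fun l _ => ?_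
            rw [Finset.sum_mul]
            exact Finset.sum_congr rfl fun a _ => by ring
    have hPmem : ∀ z : Fin n → ℝ, (fun i => ∑ i', M i i' * z i') ∈ V := by
      intro z
      have hfe : (fun i => ∑ i', M i i' * z i') = ∑ l, (∑ a, u l a * z a) • u l := by
        funext i
        rw [Finset.sum_apply]
        calc ∑ i', (∑ l, u l i * u l i') * z i'
            = ∑ i', ∑ l, u l i * u l i' * z i' := by
              exact Finset.sum_congr rfl fun i' _ => Finset.sum_mul _ _ _
          _ = ∑ l, ∑ i', u l i * u l i' * z i' := Finset.sum_comm
          _ = ∑ l, ((∑ a, u l a * z a) • u l) i := by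
              refine Finset.sum_congr rfl fun l _ => ?_
              rw [Pi.smul_apply, smul_eq_mul, Finset.sum_mul]
              exact Finset.sum_congr rfl fun a _ => by ring
      rw [hfe]
      exact Submodule.sum_mem _ fun l _ => Submodule.smul_mem _ _ (humem l)
    have htr : ∑ i, M i i = (k:ℝ) := by
      calc ∑ i, ∑ l, u l i * u l i = ∑ l, ∑ i, u l i * u l i := Finset.sum_comm
        _ = ∑ l : Fin k, (1:ℝ) := by
            refine Finset.sum_congr rfl fun l _ => ?_
            rw [horth l l, if_pos rfl]
        _ = (k:ℝ) := by simp
    -- definition of Q and its properties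
    have hQle : ∀ ε : Fin n → Bool,
        ∑ i, ∑ j, sg (ε i) * sg (ε j) * M i j ≤ (k:ℝ) := by
      intro ε
      set v : Fin n → ℝ := fun i => sg (ε i) with hv
      set q : Fin n → ℝ := fun i => ∑ i', M i i' * v i' with hq
      have hqV : q ∈ V := hPmem v
      have hEq1 : ∑ i, ∑ j, sg (ε i) * sg (ε j) * M i j = ∑ i, v i * q i := by
        refine Finset.sum_congr rfl fun i _ => ?_
        rw [hq]
        simp only
        rw [Finset.mul_sum]
        exact Finset.sum_congr rfl fun j _ => by rw [hv]; ring
      have hEq2 : ∑ i, q i ^ 2 = ∑ i, v i * q i := by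
        calc ∑ i, q i ^ 2 = ∑ i, q i * q i := by
              exact Finset.sum_congr rfl fun i _ => sq (q i) ▸ by ring
          _ = ∑ i, ∑ i', M i i' * v i' * q i := by
              refine Finset.sum_congr rfl fun i _ => ?_
              conv_lhs => rw [show q i = ∑ i', M i i' * v i' from rfl]
              rw [Finset.sum_mul]
          _ = ∑ i', ∑ i, M i i' * v i' * q i := Finset.sum_comm
          _ = ∑ i', v i' * ∑ i, M i' i * q i := by
              refine Finset.sum_congr rfl fun i' _ => ?_
              rw [Finset.mul_sum]
              exact Finset.sum_congr rfl fun i _ => by rw [hsym i i']; ring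
          _ = ∑ i', v i' * q i' := by
              refine Finset.sum_congr rfl fun i' _ => ?_
              rw [hrow q hqV i']
      have h1 : (∑ i, |q i|)^2 ≤ (k:ℝ) * ∑ i, q i ^ 2 := h q hqV
      have h2 : ∑ i, v i * q i ≤ ∑ i, |q i| := by
        refine Finset.sum_le_sum fun i _ => ?_
        calc v i * q i ≤ |v i * q i| := le_abs_self _
          _ = |v i| * |q i| := abs_mul _ _
          _ = |q i| := by rw [show v i = sg (ε i) from rfl, abs_sg, one_mul]
      have h3 : (0:ℝ) ≤ ∑ i, |q i| := Finset.sum_nonneg fun i _ => abs_nonneg _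
      have h4 : (0:ℝ) ≤ ∑ i, q i ^ 2 := Finset.sum_nonneg fun i _ => sq_nonneg _
      have h5 : (0:ℝ) ≤ (k:ℝ) := Nat.cast_nonneg k
      rw [hEq1, ← hEq2]
      nlinarith [h1, h2, h3, h4, h5, hEq2]
    have hQsum : ∑ ε : Fin n → Bool, (∑ i, ∑ j, sg (ε i) * sg (ε j) * M i j)
        = 2 ^ n * (k:ℝ) := by
      rw [Finset.sum_comm]
      have e2 : ∀ i, ∑ ε : Fin n → Bool, ∑ j, sg (ε i) * sg (ε j) * M i j
          = ∑ j, (if i = j then (2:ℝ)^n else 0) * M i j := by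
        intro i
        rw [Finset.sum_comm]
        refine Finset.sum_congr rfl fun j _ => ?_
        rw [← Finset.sum_mul, sum_sg_two]
      rw [Finset.sum_congr rfl fun i _ => e2 i]
      simp only [ite_mul, zero_mul, Finset.sum_ite_eq, Finset.mem_univ, if_true]
      rw [← Finset.mul_sum, htr]
    have hQeq : ∀ ε : Fin n → Bool, ∑ i, ∑ j, sg (ε i) * sg (ε j) * M i j = (k:ℝ) := by
      have hzero : ∑ ε : Fin n → Bool,
          ((k:ℝ) - ∑ i, ∑ j, sg (ε i) * sg (ε j) * M i j) = 0 := by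
        rw [Finset.sum_sub_distrib, hQsum]
        have : ∑ _ε : Fin n → Bool, (k:ℝ) = 2 ^ n * (k:ℝ) := by
          rw [Finset.sum_const, Finset.card_univ, Fintype.card_fun]
          simp [nsmul_eq_mul, mul_comm]
        rw [this, sub_self]
      intro ε
      have := (Finset.sum_eq_zero_iff_of_nonneg
        (fun ε _ => sub_nonneg.mpr (hQle ε))).mp hzero ε (Finset.mem_univ ε)
      linarith [this]
    have hdiag : ∀ a b : Fin n, a ≠ b → M a b = 0 := fun a b hab =>
      diag_of_Q M hsym hQeq hab
    have hcol : ∀ i, (fun a => M a i) ∈ V := by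
      intro i
      have := hPmem (Pi.single i (1:ℝ))
      have hfe : (fun a => ∑ i', M a i' * (Pi.single i (1:ℝ) : Fin n → ℝ) i') = fun a => M a i := by
        funext a
        simp [Pi.single_apply, mul_ite]
      rwa [hfe] at this
    have hM01 : ∀ i, M i i = 0 ∨ M i i = 1 := by
      intro i
      have hr := hrow _ (hcol i) i
      have hsimp : ∑ i', M i i' * M i' i = M i i * M i i := by
        rw [Finset.sum_eq_single i]
        · intro i' _ hne
          rw [hdiag i i' (Ne.symm hne), zero_mul]
        · intro habs; exact absurd (Finset.mem_univ i) habs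
      rw [hsimp] at hr
      have hfac : M i i * (M i i - 1) = 0 := by linear_combination hr
      rcases mul_eq_zero.mp hfac with h0 | h0
      · exact Or.inl h0
      · exact Or.inr (by linarith)
    set s : Finset (Fin n) := Finset.univ.filter (fun i => M i i = 1) with hs
    have hcardR : (s.card : ℝ) = (k:ℝ) := by
      calc (s.card : ℝ) = ∑ _i ∈ s, (1:ℝ) := by rw [Finset.sum_const]; simp
        _ = ∑ i, (if M i i = 1 then (1:ℝ) else 0) := by rw [hs, Finset.sum_filter]
        _ = ∑ i, M i i := by
            refine Finset.sum_congr rfl fun i _ => ?_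
            rcases hM01 i with h0 | h0 <;> simp [h0]
        _ = (k:ℝ) := htr
    have hcard : s.card = k := Nat.cast_injective hcardR
    have hVle : V ≤ Submodule.span ℝ
        ((fun i => (Pi.single i (1:ℝ) : Fin n → ℝ)) '' ↑s) := by
      intro x hx
      have hx0 : ∀ i, i ∉ s → x i = 0 := by
        intro i his
        have hMi : M i i = 0 := by
          rcases hM01 i with h0 | h0
          · exact h0
          · exact absurd (Finset.mem_filter.mpr ⟨Finset.mem_univ i, h0⟩) his
        have hr := hrow x hx i
        have hsimp : ∑ i', M i i' * x i' = M i i * x i := by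
          rw [Finset.sum_eq_single i]
          · intro i' _ hne
            rw [hdiag i i' (Ne.symm hne), zero_mul]
          · intro habs; exact absurd (Finset.mem_univ i) habs
        rw [hsimp, hMi, zero_mul] at hr
        exact hr.symm
      have hxe : x = ∑ i ∈ s, x i • (Pi.single i (1:ℝ) : Fin n → ℝ) := by
        funext a
        rw [Finset.sum_apply]
        by_cases ha : a ∈ s
        · rw [Finset.sum_eq_single a]
          · simp
          · intro i _ hne
            simp [Pi.single_apply, Ne.symm hne]
          · intro habs; exact absurd ha habs
        · rw [hx0 a ha]
          refine (Finset.sum_eq_zero fun i hi => ?_).symm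
          have hne : a ≠ i := fun hh => ha (hh ▸ hi)
          simp [Pi.single_apply, hne]
      rw [hxe]
      exact Submodule.sum_mem _ fun i hi => Submodule.smul_mem _ _
        (Submodule.subset_span ⟨i, Finset.mem_coe.mpr hi, rfl⟩)
    have hleV : Submodule.span ℝ
        ((fun i => (Pi.single i (1:ℝ) : Fin n → ℝ)) '' ↑s) ≤ V := by
      rw [Submodule.span_le]
      rintro y ⟨i, his, rfl⟩
      have his' : i ∈ s := his
      have h1 : M i i = 1 := (Finset.mem_filter.mp his').2
      show (Pi.single i (1:ℝ) : Fin n → ℝ) ∈ V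
      have hfe : (Pi.single i (1:ℝ) : Fin n → ℝ) = fun a => M a i := by
        funext a
        by_cases ha : a = i
        · subst ha; simp [Pi.single_apply, h1]
        · simp [Pi.single_apply, ha, hdiag a i ha]
      rw [hfe]
      exact hcol i
    exact ⟨s, hcard, le_antisymm hVle hleV⟩
  · rintro ⟨s, hcard, rfl⟩
    intro x hx
    have hx0 : ∀ i ∉ s, x i = 0 := by
      induction hx using Submodule.span_induction with
      | mem y hy =>
        obtain ⟨i, hi, rfl⟩ := hy
        intro a ha
        have hne : a ≠ i := fun hh => ha (hh ▸ hi)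
        simp [Pi.single_apply, hne]
      | zero => intro a _; rfl
      | add y z _ _ hy hz => intro a ha; simp [Pi.add_apply, hy a ha, hz a ha]
      | smul c y _ hy => intro a ha; simp [Pi.smul_apply, hy a ha]
    have hsub : (∑ i, |x i|) = ∑ i ∈ s, |x i| := by
      refine (Finset.sum_subset (Finset.subset_univ s) fun i _ hi => ?_).symm
      rw [hx0 i hi, abs_zero]
    have hcs : (∑ i ∈ s, |x i|)^2 ≤ (s.card : ℝ) * ∑ i ∈ s, x i ^ 2 := by
      have := sq_sum_le_card_mul_sum_sq (s := s) (f := fun i => |x i|)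
      simpa [sq_abs] using this
    have hmono : ∑ i ∈ s, x i ^ 2 ≤ ∑ i, x i ^ 2 :=
      Finset.sum_le_sum_of_subset_of_nonneg (Finset.subset_univ s)
        (fun i _ _ => sq_nonneg _)
    calc (∑ i, |x i|)^2 = (∑ i ∈ s, |x i|)^2 := by rw [hsub]
      _ ≤ (s.card : ℝ) * ∑ i ∈ s, x i ^ 2 := hcs
      _ = (k : ℝ) * ∑ i ∈ s, x i ^ 2 := by rw [hcard]
      _ ≤ (k : ℝ) * ∑ i, x i ^ 2 := by
          exact mul_le_mul_of_nonneg_left hmono (Nat.cast_nonneg k)
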